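/- A connected simple graph is not a complete multipartite graph if and only if it contains P_4, the paw graph G_1 (a triangle with one pendant edge), or the disjoint union of two copies of P_2 as an induced subgraph. -/

import Mathlib

/-- A graph is complete multipartite: vertices can be labelled so that two
vertices are adjacent iff their labels differ. -/
def IsCompleteMultipartite {V : Type} (G : SimpleGraph V) : Prop :=
  ∃ (ι : Type) (p : V → ι), ∀ u v : V, G.Adj u v ↔ p u ≠ p v

/-- G contains an induced copy of H. -/
def HasInducedCopy {V W : Type} (G : SimpleGraph V) (H : SimpleGraph W) : Prop :=
  ∃ f : W → V, Function.Injective f ∧ ∀ i j : W, G.Adj (f i) (f j) ↔ H.Adj i j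

/-- The paw graph: a triangle 0-1-2 with the pendant edge 2-3. -/
def pawGraph : SimpleGraph (Fin 4) :=
  SimpleGraph.fromRel (fun i j =>
    (i = 0 ∧ j = 1) ∨ (i = 0 ∧ j = 2) ∨ (i = 1 ∧ j = 2) ∨ (i = 2 ∧ j = 3))

/-- The disjoint union of two edges, on four vertices. -/
def twoP2 : SimpleGraph (Fin 4) :=
  SimpleGraph.fromRel (fun i j => (i = 0 ∧ j = 1) ∨ (i = 2 ∧ j = 3))

/-- A connected graph is not complete multipartite iff it contains an induced
P4, an induced paw, or an induced disjoint union of two edges. -/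
lemma badTriple {V : Type} {G : SimpleGraph V} (h : ¬ IsCompleteMultipartite G) :
    ∃ u w v, G.Adj u w ∧ ¬G.Adj v u ∧ ¬G.Adj v w := by
  by_contra hc
  push_neg at hc
  apply h
  have htrans : ∀ {a b c : V}, ¬G.Adj a b → ¬G.Adj b c → ¬G.Adj a c := by
    intro a b c hab hbc hac
    exact hbc (hc a c b hac (fun h' => hab h'.symm))
  let s : Setoid V := ⟨fun a b => ¬G.Adj a b,
    ⟨fun a => G.irrefl, fun h h' => h h'.symm, htrans⟩⟩
  refine ⟨Quotient s, Quotient.mk s, fun u v => ⟨fun hadj heq => ?_, fun hne => ?_⟩⟩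
  · exact (Quotient.exact heq : ¬G.Adj u v) hadj
  · by_contra hn
    exact hne (Quotient.sound (hn : ¬G.Adj u v))

lemma walk_lemma {V : Type} {G : SimpleGraph V} {v u : V} (W : G.Walk v u) :
    ∀ {w : V}, G.Adj u w → ¬G.Adj v u → ¬G.Adj v w →
      HasInducedCopy G (SimpleGraph.pathGraph 4) ∨ HasInducedCopy G pawGraph := by
  induction W with
  | nil =>
    intro w hadj _ hvw
    exact absurd hadj hvw
  | @cons v x u h p ih =>
    intro w hadj hvu hvw
    have hvu' : v ≠ u := fun he => hvw (he ▸ hadj)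
    have hvw' : v ≠ w := fun he => hvu (he ▸ hadj.symm)
    have huv : ¬G.Adj u v := fun hh => hvu hh.symm
    have hwv : ¬G.Adj w v := fun hh => hvw hh.symm
    by_cases hxu : G.Adj x u
    · by_cases hxw : G.Adj x w
      · -- paw: 0↦u, 1↦w, 2↦x, 3↦v
        right
        refine ⟨![u, w, x, v], ?_, ?_⟩
        · have h1 : u ≠ w := hadj.ne
          have h2 : u ≠ x := hxu.ne'
          have h3 : w ≠ x := hxw.ne'
          have h4 : x ≠ v := h.ne'
          intro i j hij
          fin_cases i <;> fin_cases j <;> simp_all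
        · intro i j
          fin_cases i <;> fin_cases j <;>
            simp [pawGraph, SimpleGraph.fromRel_adj, Fin.ext_iff, -Fin.val_eq_zero_iff, hadj, hadj.symm,
              hxu, hxu.symm, hxw, hxw.symm, h.symm, h, hvu, hvw, huv, hwv] <;> decide
      · -- P4: v x u w
        left
        refine ⟨![v, x, u, w], ?_, ?_⟩
        · have h1 : v ≠ x := h.ne
          have h2 : x ≠ u := hxu.ne
          have h3 : u ≠ w := hadj.ne
          have h4 : x ≠ w := fun he => hvw (he ▸ h)
          intro i j hij
          fin_cases i <;> fin_cases j <;> simp_all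
        · have hwx : ¬G.Adj w x := fun hh => hxw hh.symm
          intro i j
          fin_cases i <;> fin_cases j <;>
            simp [SimpleGraph.pathGraph_adj, Fin.ext_iff, h, h.symm, hxu, hxu.symm,
              hadj, hadj.symm, hvu, hvw, hxw, hwx, huv, hwv] <;> decide
    · by_cases hxw : G.Adj x w
      · -- P4: v x w u
        left
        refine ⟨![v, x, w, u], ?_, ?_⟩
        · have h1 : v ≠ x := h.ne
          have h2 : x ≠ w := hxw.ne
          have h3 : w ≠ u := hadj.ne'
          have h4 : x ≠ u := fun he => hvu (he ▸ h)
          intro i j hij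
          fin_cases i <;> fin_cases j <;> simp_all
        · have hux : ¬G.Adj u x := fun hh => hxu hh.symm
          intro i j
          fin_cases i <;> fin_cases j <;>
            simp [SimpleGraph.pathGraph_adj, Fin.ext_iff, h, h.symm, hxw, hxw.symm,
              hadj, hadj.symm, hvu, hvw, hxu, hux, huv, hwv] <;> decide
      · exact ih hadj hxu hxw

theorem not_completeMultipartite_iff
    {V : Type} (G : SimpleGraph V) (hconn : G.Connected) :
    ¬ IsCompleteMultipartite G ↔
      (HasInducedCopy G (SimpleGraph.pathGraph 4) ∨
       HasInducedCopy G pawGraph ∨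
       HasInducedCopy G twoP2) := by
  constructor
  · intro h
    obtain ⟨u, w, v, hadj, hvu, hvw⟩ := badTriple h
    obtain ⟨W⟩ := hconn.preconnected v u
    rcases walk_lemma W hadj hvu hvw with h1 | h2
    · exact Or.inl h1
    · exact Or.inr (Or.inl h2)
  · rintro (⟨f, -, hf⟩ | ⟨f, -, hf⟩ | ⟨f, -, hf⟩) ⟨ι, p, hp⟩
    · have a23 : G.Adj (f 2) (f 3) := (hf 2 3).mpr (by rw [SimpleGraph.pathGraph_adj]; decide)
      have n02 : ¬G.Adj (f 0) (f 2) := fun hh =>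
        (by rw [SimpleGraph.pathGraph_adj]; decide : ¬(SimpleGraph.pathGraph 4).Adj 0 2)
          ((hf 0 2).mp hh)
      have n03 : ¬G.Adj (f 0) (f 3) := fun hh =>
        (by rw [SimpleGraph.pathGraph_adj]; decide : ¬(SimpleGraph.pathGraph 4).Adj 0 3)
          ((hf 0 3).mp hh)
      have e02 : p (f 0) = p (f 2) := not_not.mp (fun hn => n02 ((hp _ _).mpr hn))
      have e03 : p (f 0) = p (f 3) := not_not.mp (fun hn => n03 ((hp _ _).mpr hn))
      exact (hp _ _).mp a23 (e02 ▸ e03)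
    · have a01 : G.Adj (f 0) (f 1) :=
        (hf 0 1).mpr (by simp [pawGraph, SimpleGraph.fromRel_adj])
      have n30 : ¬G.Adj (f 3) (f 0) := fun hh =>
        (by simp [pawGraph, SimpleGraph.fromRel_adj] : ¬pawGraph.Adj 3 0)
          ((hf 3 0).mp hh)
      have n31 : ¬G.Adj (f 3) (f 1) := fun hh =>
        (by simp [pawGraph, SimpleGraph.fromRel_adj] : ¬pawGraph.Adj 3 1)
          ((hf 3 1).mp hh)
      have e30 : p (f 3) = p (f 0) := not_not.mp (fun hn => n30 ((hp _ _).mpr hn))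
      have e31 : p (f 3) = p (f 1) := not_not.mp (fun hn => n31 ((hp _ _).mpr hn))
      exact (hp _ _).mp a01 (e30 ▸ e31)
    · have a23 : G.Adj (f 2) (f 3) :=
        (hf 2 3).mpr (by simp [twoP2, SimpleGraph.fromRel_adj])
      have n02 : ¬G.Adj (f 0) (f 2) := fun hh =>
        (by simp [twoP2, SimpleGraph.fromRel_adj] : ¬twoP2.Adj 0 2)
          ((hf 0 2).mp hh)
      have n03 : ¬G.Adj (f 0) (f 3) := fun hh =>
        (by simp [twoP2, SimpleGraph.fromRel_adj] : ¬twoP2.Adj 0 3)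
          ((hf 0 3).mp hh)
      have e02 : p (f 0) = p (f 2) := not_not.mp (fun hn => n02 ((hp _ _).mpr hn))
      have e03 : p (f 0) = p (f 3) := not_not.mp (fun hn => n03 ((hp _ _).mpr hn))
      exact (hp _ _).mp a23 (e02 ▸ e03)
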